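/- Let A → B be an extension of commutative rings where B is a domain whose fraction field embeds everything, and suppose A → B is subintegral (integral, Spec-bijective, equiresidual). Then for every b ∈ B, the element b⊗1 − 1⊗b is nilpotent in B⊗_A B. -/

import Mathlib

open TensorProduct

/-- The saturation of `A` in `B`: elements `b` of `B` such that `b ⊗ 1 - 1 ⊗ b` is
nilpotent in `B ⊗[A] B`. -/
def saturation (A : Type*) {B : Type*} [CommRing A] [CommRing B] [Algebra A B] : Set B :=
  {b | IsNilpotent (b ⊗ₜ[A] (1 : B) - (1 : B) ⊗ₜ[A] b)}

/-- The induced map on residue fields `k(p ∩ A) → k(p)` associated to a ring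
homomorphism `f : A →+* B` and a prime `p` of `B`. -/
noncomputable def residueFieldMap {A B : Type*} [CommRing A] [CommRing B] (f : A →+* B)
    (p : Ideal B) [p.IsPrime] :
    IsLocalRing.ResidueField (Localization.AtPrime (p.comap f)) →+*
      IsLocalRing.ResidueField (Localization.AtPrime p) :=
  haveI := Localization.isLocalHom_localRingHom (p.comap f) p f rfl
  IsLocalRing.ResidueField.map (Localization.localRingHom (p.comap f) p f rfl)

/-- A ring homomorphism `f : A →+* B` is equiresidual if for every prime `p` of `B`
the induced residue field extension `k(p ∩ A) → k(p)` is an isomorphism. -/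
def Equiresidual {A B : Type*} [CommRing A] [CommRing B] (f : A →+* B) : Prop :=
  ∀ (p : Ideal B) (hp : p.IsPrime),
    Function.Bijective (@residueFieldMap _ _ _ _ f p hp)


/-- Naturality: the residue field map commutes with the canonical maps to residue fields. -/
lemma residueFieldMap_natural {A B : Type*} [CommRing A] [CommRing B] (f : A →+* B)
    (p : Ideal B) [p.IsPrime] (x : A) :
    residueFieldMap f p
      (IsLocalRing.residue _ (algebraMap A (Localization.AtPrime (p.comap f)) x)) =
    IsLocalRing.residue _ (algebraMap B (Localization.AtPrime p) (f x)) := by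
  haveI := Localization.isLocalHom_localRingHom (p.comap f) p f rfl
  rw [residueFieldMap, IsLocalRing.ResidueField.map_residue, Localization.localRingHom_to_map]

/-- From surjectivity of the residue field map at `p`, every `b : B` is congruent mod `p`
to a fraction from `A`. -/
lemma exists_frac_of_surjective {A B : Type*} [CommRing A] [CommRing B] (f : A →+* B)
    (p : Ideal B) [hp : p.IsPrime]
    (hsurj : Function.Surjective (residueFieldMap f p)) (b : B) :
    ∃ a s : A, s ∉ p.comap f ∧ b * f s - f a ∈ p := by
  set pA := p.comap f
  obtain ⟨y, hy⟩ := hsurj (IsLocalRing.residue _ (algebraMap B (Localization.AtPrime p) b))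
  obtain ⟨z, rfl⟩ := Ideal.Quotient.mk_surjective y
  obtain ⟨⟨a, s⟩, rfl⟩ := IsLocalization.mk'_surjective pA.primeCompl z
  have hspec : algebraMap A (Localization.AtPrime pA) s *
      IsLocalization.mk' (Localization.AtPrime pA) a s
      = algebraMap A (Localization.AtPrime pA) a := IsLocalization.mk'_spec' _ a s
  have h1 := congrArg (residueFieldMap f p ∘ IsLocalRing.residue (Localization.AtPrime pA)) hspec
  simp only [Function.comp_apply, map_mul] at h1
  rw [residueFieldMap_natural, residueFieldMap_natural] at h1
  have hy' : residueFieldMap f p (IsLocalRing.residue (Localization.AtPrime pA)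
      (IsLocalization.mk' (Localization.AtPrime pA) a s)) =
      IsLocalRing.residue (Localization.AtPrime p)
        (algebraMap B (Localization.AtPrime p) b) := hy
  rw [hy'] at h1
  have h2 : IsLocalRing.residue (Localization.AtPrime p)
      (algebraMap B (Localization.AtPrime p) (b * f s - f a)) = 0 := by
    simp only [map_sub, map_mul]
    rw [mul_comm, h1, sub_self]
  refine ⟨a, s, s.2, ?_⟩
  have := (Ideal.Quotient.eq_zero_iff_mem).mp h2
  rwa [IsLocalization.AtPrime.to_map_mem_maximal_iff (Localization.AtPrime p) p] at this


/-- If `A → B` is a subintegral extension (integral, bijective on prime spectra, and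
equiresidual) with `B` a domain, then `b ⊗ 1 - 1 ⊗ b` is nilpotent in `B ⊗[A] B` for
every `b ∈ B`, i.e. `B` is its own saturation over `A`. -/
theorem subintegral_imp_saturation_top {A B : Type*} [CommRing A] [CommRing B] [IsDomain B]
    [Algebra A B] (hinj : Function.Injective (algebraMap A B))
    [Algebra.IsIntegral A B]
    (hspec : Function.Bijective (PrimeSpectrum.comap (algebraMap A B)))
    (hres : Equiresidual (algebraMap A B)) :
    ∀ b : B, IsNilpotent (b ⊗ₜ[A] (1 : B) - (1 : B) ⊗ₜ[A] b) := by
  intro b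
  rw [← mem_nilradical, nilradical_eq_sInf]
  refine Submodule.mem_sInf.mpr ?_
  intro q hq
  haveI hqp : Ideal.IsPrime q := hq
  let i1 : B →+* B ⊗[A] B := Algebra.TensorProduct.includeLeftRingHom
  let i2 : B →+* B ⊗[A] B :=
    (Algebra.TensorProduct.includeRight (R := A) (A := B) (B := B)).toRingHom
  have hc1 : ∀ x : A, i1 (algebraMap A B x) = algebraMap A (B ⊗[A] B) x := by
    intro x
    simp [i1, Algebra.TensorProduct.includeLeftRingHom_apply,
      Algebra.TensorProduct.algebraMap_apply]
  have hc2 : ∀ x : A, i2 (algebraMap A B x) = algebraMap A (B ⊗[A] B) x := by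
    intro x
    simp only [i2, AlgHom.toRingHom_eq_coe, RingHom.coe_coe,
      Algebra.TensorProduct.includeRight_apply, Algebra.TensorProduct.algebraMap_apply]
    rw [Algebra.algebraMap_eq_smul_one, TensorProduct.smul_tmul]
  haveI hP1 : (Ideal.comap i1 q).IsPrime := Ideal.IsPrime.comap i1
  haveI hP2 : (Ideal.comap i2 q).IsPrime := Ideal.IsPrime.comap i2
  have hcomp : i1.comp (algebraMap A B) = i2.comp (algebraMap A B) :=
    RingHom.ext fun x => by rw [RingHom.comp_apply, RingHom.comp_apply, hc1, hc2]
  have hcomap : Ideal.comap (algebraMap A B) (Ideal.comap i1 q) = Ideal.comap (algebraMap A B) (Ideal.comap i2 q) := by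
    rw [Ideal.comap_comap, Ideal.comap_comap, hcomp]
  have hp12 : Ideal.comap i1 q = Ideal.comap i2 q := by
    have h := hspec.1 (a₁ := ⟨Ideal.comap i1 q, hP1⟩) (a₂ := ⟨Ideal.comap i2 q, hP2⟩)
      (PrimeSpectrum.ext (by simpa [PrimeSpectrum.comap_asIdeal] using hcomap))
    exact congrArg PrimeSpectrum.asIdeal h
  obtain ⟨a, s, hs, hmem⟩ := exists_frac_of_surjective (algebraMap A B) (Ideal.comap i1 q)
    (hres (Ideal.comap i1 q) hP1).2 b
  have h1 : i1 b * algebraMap A (B ⊗[A] B) s - algebraMap A (B ⊗[A] B) a ∈ q := by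
    have h := Ideal.mem_comap.mp hmem
    rwa [map_sub, map_mul, hc1, hc1] at h
  have h2 : i2 b * algebraMap A (B ⊗[A] B) s - algebraMap A (B ⊗[A] B) a ∈ q := by
    have hmem2 : b * algebraMap A B s - algebraMap A B a ∈ Ideal.comap i2 q := hp12 ▸ hmem
    have h := Ideal.mem_comap.mp hmem2
    rwa [map_sub, map_mul, hc2, hc2] at h
  have hsub : (i1 b - i2 b) * algebraMap A (B ⊗[A] B) s ∈ q := by
    have h := q.sub_mem h1 h2
    have heq : i1 b * algebraMap A (B ⊗[A] B) s - algebraMap A (B ⊗[A] B) a -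
        (i2 b * algebraMap A (B ⊗[A] B) s - algebraMap A (B ⊗[A] B) a) =
        (i1 b - i2 b) * algebraMap A (B ⊗[A] B) s := by ring
    rwa [heq] at h
  have hcs : algebraMap A (B ⊗[A] B) s ∉ q := by
    intro h
    refine hs (Ideal.mem_comap.mpr (Ideal.mem_comap.mpr ?_))
    rwa [hc1 s]
  have hfinal : i1 b - i2 b ∈ q := (hqp.mem_or_mem hsub).resolve_right hcs
  simpa [i1, i2, Algebra.TensorProduct.includeLeftRingHom_apply,
    Algebra.TensorProduct.includeRight_apply] using hfinal
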